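/- Let V₁, ..., V_m be i.i.d. standard normal random variables. Then for all t > 0, P( Σ_{k=1}^m V_k² ≥ m + 2√(t·m) + 2t ) ≤ exp(−t). -/

import Mathlib

open Real MeasureTheory ProbabilityTheory
open scoped ENNReal NNReal

lemma log_ge_aux {s : ℝ} (hs : 0 < s) (hs1 : s ≤ 1) :
    (s - 1/s)/2 ≤ Real.log s := by
  set f : ℝ → ℝ := fun s => Real.log s - (s - 1/s)/2 with hf
  have hderiv : ∀ x ∈ Set.Ioi (0:ℝ), HasDerivAt f (-(x-1)^2/(2*x^2)) x := by
    intro x hx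
    have hx0 : x ≠ 0 := ne_of_gt hx
    have h1 : HasDerivAt (fun y : ℝ => Real.log y) x⁻¹ x := Real.hasDerivAt_log hx0
    have h2 : HasDerivAt (fun y : ℝ => (y - 1/y)/2) ((1 + 1/x^2)/2) x := by
      have : HasDerivAt (fun y : ℝ => y - 1/y) (1 + 1/x^2) x := by
        have hinv : HasDerivAt (fun y : ℝ => 1/y) (-(x^2)⁻¹) x := by
          simpa [one_div] using (hasDerivAt_inv hx0)
        have := (hasDerivAt_id x).sub hinv
        exact this.congr_deriv (by ring)
      simpa using this.div_const 2
    have := h1.sub h2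
    exact this.congr_deriv (by field_simp; ring)
  have hcont : ContinuousOn f (Set.Ioi 0) := fun x hx =>
    ((hderiv x hx).continuousAt).continuousWithinAt
  have hanti : AntitoneOn f (Set.Ioi 0) := by
    apply AntitoneOn.mono (antitoneOn_of_deriv_nonpos (convex_Ioi 0) ?_ ?_ ?_) (le_refl _)
    · exact hcont
    · intro x hx
      rw [interior_Ioi] at hx
      exact (hderiv x hx).differentiableAt.differentiableWithinAt
    · intro x hx
      rw [interior_Ioi] at hx
      rw [(hderiv x hx).deriv]
      have : (0:ℝ) < x := hx
      have h2 : (0:ℝ) < 2*x^2 := by positivity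
      apply div_nonpos_of_nonpos_of_nonneg
      · nlinarith [sq_nonneg (x-1)]
      · positivity
  have h01 : (1:ℝ) ∈ Set.Ioi (0:ℝ) := by norm_num
  have := hanti (Set.mem_Ioi.mpr hs) h01 hs1
  simp only [hf, Real.log_one, one_div] at this
  rw [one_div]
  linarith
lemma pdf_mul_eq {c : ℝ} (x : ℝ) :
    gaussianPDFReal 0 1 x * Real.exp (c * x^2) =
      (Real.sqrt (2*π))⁻¹ * Real.exp (-(1/2 - c) * x^2) := by
  simp only [gaussianPDFReal, NNReal.coe_one, mul_one, sub_zero]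
  rw [mul_assoc, ← Real.exp_add]
  ring_nf

lemma integrable_exp_sq_gaussian {c : ℝ} (hc : c < 1/2) :
    Integrable (fun x => Real.exp (c * x^2)) (gaussianReal 0 1) := by
  rw [gaussianReal_of_var_ne_zero 0 one_ne_zero]
  have hmeas : Measurable fun x => (gaussianPDFReal 0 1 x).toNNReal :=
    (measurable_gaussianPDFReal 0 1).real_toNNReal
  have : (gaussianPDF 0 1) = fun x => ((gaussianPDFReal 0 1 x).toNNReal : ℝ≥0∞) := rfl
  rw [this]
  rw [integrable_withDensity_iff_integrable_smul hmeas]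
  have heq : ∀ x : ℝ, ((gaussianPDFReal 0 1 x).toNNReal : ℝ) • Real.exp (c * x^2)
      = (Real.sqrt (2*π))⁻¹ * Real.exp (-(1/2 - c) * x^2) := by
    intro x
    rw [smul_eq_mul, Real.coe_toNNReal _ (gaussianPDFReal_nonneg 0 1 x), pdf_mul_eq]
  have hb : (0:ℝ) < 1/2 - c := by linarith
  refine (Integrable.const_mul (integrable_exp_neg_mul_sq hb) ((Real.sqrt (2*π))⁻¹)).congr ?_
  filter_upwards with x
  exact (heq x).symm

lemma integral_exp_sq_gaussian {c : ℝ} (hc : c < 1/2) :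
    ∫ x, Real.exp (c * x^2) ∂(gaussianReal 0 1) = (Real.sqrt (1 - 2*c))⁻¹ := by
  rw [gaussianReal_of_var_ne_zero 0 one_ne_zero]
  have hmeas : Measurable fun x => (gaussianPDFReal 0 1 x).toNNReal :=
    (measurable_gaussianPDFReal 0 1).real_toNNReal
  have h0 : (gaussianPDF 0 1) = fun x => ((gaussianPDFReal 0 1 x).toNNReal : ℝ≥0∞) := rfl
  rw [h0, integral_withDensity_eq_integral_smul hmeas]
  have hb : (0:ℝ) < 1/2 - c := by linarith
  calc ∫ x, (gaussianPDFReal 0 1 x).toNNReal • Real.exp (c * x^2)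
      = ∫ x, (Real.sqrt (2*π))⁻¹ * Real.exp (-(1/2 - c) * x^2) := by
        congr 1; funext x
        rw [NNReal.smul_def, smul_eq_mul,
          Real.coe_toNNReal _ (gaussianPDFReal_nonneg 0 1 x), pdf_mul_eq]
    _ = (Real.sqrt (2*π))⁻¹ * Real.sqrt (π / (1/2 - c)) := by
        rw [MeasureTheory.integral_const_mul, integral_gaussian]
    _ = (Real.sqrt (1 - 2*c))⁻¹ := by
        rw [← Real.sqrt_inv, ← Real.sqrt_mul (by positivity), ← Real.sqrt_inv]
        congr 1
        have hπ : (0:ℝ) < π := Real.pi_pos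
        have h1c : (1 - 2*c) ≠ 0 := by linarith
        field_simp
open ProbabilityTheory MeasureTheory in
theorem stmt_6 {Ω : Type*} [MeasurableSpace Ω] (μ : Measure Ω) [IsProbabilityMeasure μ]
    (m : ℕ) (V : Fin m → Ω → ℝ)
    (hmeas : ∀ k, Measurable (V k))
    (hgauss : ∀ k, Measure.map (V k) μ = gaussianReal 0 1)
    (hindep : iIndepFun V μ)
    (t : ℝ) (ht : 0 < t) :
    μ {ω | (m : ℝ) + 2 * Real.sqrt (t * m) + 2 * t ≤ ∑ k, (V k ω) ^ 2} ≤
      ENNReal.ofReal (Real.exp (-t)) := by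
  rcases Nat.eq_zero_or_pos m with hm | hm
  · subst hm
    have hset : {ω | (0:ℕ) + 2 * Real.sqrt (t * (0:ℕ)) + 2 * t ≤ ∑ k : Fin 0, (V k ω) ^ 2} = ∅ := by
      ext ω
      simp only [Set.mem_setOf_eq, Finset.univ_eq_empty, Finset.sum_empty, Set.mem_empty_iff_false,
        iff_false, not_le, Nat.cast_zero, mul_zero, Real.sqrt_zero]
      linarith
    rw [hset]
    simp
  -- main case
  set p : ℝ := Real.sqrt m with hp_def
  set q : ℝ := Real.sqrt t with hq_def
  have hp : 0 < p := Real.sqrt_pos.mpr (by exact_mod_cast hm)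
  have hq : 0 < q := Real.sqrt_pos.mpr ht
  have hp2 : p^2 = m := Real.sq_sqrt (Nat.cast_nonneg m)
  have hq2 : q^2 = t := Real.sq_sqrt ht.le
  have hpq : 0 < p + 2*q := by linarith
  set l : ℝ := q / (p + 2*q) with hl_def
  have hl0 : 0 < l := div_pos hq hpq
  have hl2 : l < 1/2 := by
    rw [hl_def, div_lt_iff₀ hpq]; linarith
  set s : ℝ := 1 - 2*l with hs_def
  have hs_eq : s = p / (p + 2*q) := by
    rw [hs_def, hl_def]; field_simp; ring
  have hs0 : 0 < s := by rw [hs_eq]; positivity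
  have hs1 : s ≤ 1 := by linarith
  set a : ℝ := (m : ℝ) + 2 * Real.sqrt (t * m) + 2 * t with ha_def
  have ha_eq : a = p^2 + 2*(q*p) + 2*q^2 := by
    rw [ha_def, hp2, hq2, Real.sqrt_mul ht.le, ← hp_def, ← hq_def]
  set X : Fin m → Ω → ℝ := fun k ω => (V k ω)^2 with hX_def
  have hXmeas : ∀ k, Measurable (X k) := fun k => (hmeas k).pow_const 2
  have hindepX : iIndepFun X μ :=
    hindep.comp (fun _ x => x^2) (fun _ => measurable_id.pow_const 2)
  have hintk : ∀ k, Integrable (fun ω => Real.exp (l * X k ω)) μ := by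
    intro k
    have h := integrable_exp_sq_gaussian hl2
    rw [← hgauss k] at h
    exact (integrable_map_measure
      (((measurable_id.pow_const 2).const_mul l).exp.aestronglyMeasurable)
      (hmeas k).aemeasurable).mp h
  have hmgfk : ∀ k, mgf (X k) μ l = (Real.sqrt s)⁻¹ := by
    intro k
    have hg : AEStronglyMeasurable (fun x : ℝ => Real.exp (l * x^2)) (Measure.map (V k) μ) :=
      (Measurable.aestronglyMeasurable (by measurability))
    have h1 : mgf (X k) μ l = ∫ x, Real.exp (l * x^2) ∂(Measure.map (V k) μ) := by
      rw [integral_map (hmeas k).aemeasurable hg]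
      rfl
    rw [h1, hgauss k, integral_exp_sq_gaussian hl2, hs_def]
  have hmgfS : mgf (∑ k, X k) μ l = ((Real.sqrt s)⁻¹)^m := by
    rw [hindepX.mgf_sum hXmeas]
    simp [hmgfk]
  have hintS : Integrable (fun ω => Real.exp (l * (∑ k, X k) ω)) μ :=
    hindepX.integrable_exp_mul_sum hXmeas (fun k _ => hintk k)
  have hch := measure_ge_le_exp_mul_mgf (μ := μ) (X := ∑ k, X k) (t := l) a hl0.le hintS
  rw [hmgfS] at hch
  have hsetEq : {ω | (m : ℝ) + 2 * Real.sqrt (t * m) + 2 * t ≤ ∑ k, (V k ω) ^ 2}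
      = {ω | a ≤ (∑ k, X k) ω} := by
    ext ω
    simp [ha_def, hX_def, Finset.sum_apply]
  rw [hsetEq, ← ENNReal.ofReal_toReal (measure_ne_top μ _)]
  apply ENNReal.ofReal_le_ofReal
  refine hch.trans ?_
  -- exp (-l * a) * ((√s)⁻¹)^m ≤ exp (-t)
  have hsqrt : Real.sqrt s = Real.exp (Real.log s / 2) := by
    rw [← Real.log_sqrt hs0.le, Real.exp_log (Real.sqrt_pos.mpr hs0)]
  have hpow : ((Real.sqrt s)⁻¹)^m = Real.exp (-(m * (Real.log s / 2))) := by
    rw [hsqrt, ← Real.exp_neg, ← Real.exp_nat_mul, neg_mul_eq_mul_neg, mul_neg]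
  rw [hpow, ← Real.exp_add, Real.exp_le_exp]
  -- -l * a + -(m * (log s / 2)) ≤ -t
  have hlog := log_ge_aux hs0 hs1
  have hm0 : (0:ℝ) ≤ m := Nat.cast_nonneg m
  have key : l * a + (p^2/2) * ((s - 1/s)/2) = t := by
    rw [ha_eq, hl_def, hs_eq, ← hq2]
    field_simp
    ring
  have : t ≤ l * a + (m : ℝ) * (Real.log s / 2) := by
    rw [← hp2]
    nlinarith [sq_nonneg p]
  linarith
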